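/- arXiv:2310.15854 — 4 statements merged into one kernel-verified Lean document; each statement's English description precedes it below -/
import Mathlib

section
/- Let Λ be absolutely continuous with derivative λ(t, X_t) where λ(t,x) > 0 for x < 0 and λ(t,x) = 0 for x ≥ 0, and let X be continuous. Then the image Λ(𝒵) of the zero set 𝒵 = {t ∈ [0,T] : X_t = 0} under Λ has Lebesgue measure zero. -/
open MeasureTheory Set

/-- The Lebesgue measure of the image of any set under a Stieltjes function is bounded
by its Stieltjes measure. -/
lemma volume_image_le_stieltjes_measure (M : StieltjesFunction ℝ) (s : Set ℝ) :
    volume (⇑M '' s) ≤ M.measure s := by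
  have houter : M.measure s = M.outer s := by
    rw [StieltjesFunction.measure]; rfl
  rw [houter, StieltjesFunction.outer, OuterMeasure.ofFunction_apply]
  refine le_iInf fun t => le_iInf fun ht => ?_
  have h1 : ⇑M '' s ⊆ ⋃ n, ⇑M '' t n := by
    rw [← image_iUnion]; exact image_mono ht
  refine (measure_mono h1).trans ((measure_iUnion_le _).trans ?_)
  refine ENNReal.tsum_le_tsum fun n => ?_
  rw [StieltjesFunction.length_eq]
  refine le_iInf fun a => le_iInf fun b => le_iInf fun hab => ?_
  have h2 : ⇑M '' t n ⊆ Icc (M a) (M b) := by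
    rintro y ⟨x, hx, rfl⟩
    exact ⟨M.mono (hab ⟨hx, not_isBot x⟩).1.le, M.mono (hab ⟨hx, not_isBot x⟩).2⟩
  calc volume (⇑M '' t n) ≤ volume (Icc (M a) (M b)) := measure_mono h2
    _ = ENNReal.ofReal (M b - M a) := Real.volume_Icc

/-- If `Λ_t = ∫₀ᵗ λ(s, X_s) ds` where `λ(t,x) > 0` for `x < 0` and `λ(t,x) = 0` for
`x ≥ 0`, and `X` is continuous, then the image under `Λ` of the zero set
`𝒵 = {t ∈ [0,T] : X_t = 0}` has Lebesgue measure zero. -/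
theorem image_of_zero_set_null
    (T : ℝ) (hT : 0 ≤ T) (X : ℝ → ℝ) (l : ℝ → ℝ → ℝ)
    (hX : Continuous X)
    (hl_meas : Measurable (Function.uncurry l))
    (hl_nonneg : ∀ t x, 0 ≤ l t x)
    (hl_pos : ∀ t x, x < 0 → 0 < l t x)
    (hl_zero : ∀ t x, 0 ≤ x → l t x = 0)
    (hint : IntegrableOn (fun s => l s (X s)) (Icc 0 T))
    (Λ : ℝ → ℝ) (hΛ : ∀ t, Λ t = ∫ s in (0 : ℝ)..t, l s (X s)) :
    volume (Λ '' {t | t ∈ Icc (0 : ℝ) T ∧ X t = 0}) = 0 := by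
  set f : ℝ → ℝ := fun s => l s (X s) with hf
  have hf_meas : Measurable f := hl_meas.comp (measurable_id.prodMk hX.measurable)
  set g : ℝ → ℝ := (Icc (0:ℝ) T).indicator f with hg
  have hg_meas : Measurable g := hf_meas.indicator measurableSet_Icc
  have hg_nonneg : ∀ s, 0 ≤ g s := fun s => by
    by_cases h : s ∈ Icc (0:ℝ) T <;> simp [hg, indicator, h, hf, hl_nonneg]
  have hg_int : Integrable g := (integrable_indicator_iff measurableSet_Icc).2 hint
  set L : ℝ → ℝ := fun t => ∫ s in (0:ℝ)..t, g s with hL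
  have hL_cont : Continuous L := hg_int.continuous_primitive 0
  have hL_sub : ∀ a b : ℝ, L b - L a = ∫ s in a..b, g s := fun a b =>
    intervalIntegral.integral_interval_sub_left hg_int.intervalIntegrable
      hg_int.intervalIntegrable
  have hL_mono : Monotone L := by
    intro a b hab
    have h0 : 0 ≤ L b - L a := by
      rw [hL_sub]
      exact intervalIntegral.integral_nonneg hab fun s _ => hg_nonneg s
    linarith
  set M : StieltjesFunction ℝ :=
    ⟨L, hL_mono, fun x => hL_cont.continuousWithinAt⟩ with hM
  -- the Stieltjes measure of M is volume with density g
  set ν : Measure ℝ := volume.withDensity (fun s => ENNReal.ofReal (g s)) with hν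
  have hMν : M.measure = ν := by
    refine Measure.ext_of_Ioc _ _ fun a b hab => ?_
    rw [StieltjesFunction.measure_Ioc]
    have h1 : M b - M a = ∫ s in Set.Ioc a b, g s := by
      show L b - L a = _
      rw [hL_sub, intervalIntegral.integral_of_le hab.le]
    rw [h1, hν, withDensity_apply _ measurableSet_Ioc]
    exact ofReal_integral_eq_lintegral_ofReal hg_int.integrableOn
      (Filter.Eventually.of_forall hg_nonneg)
  -- the zero set
  set Z : Set ℝ := {t | t ∈ Icc (0:ℝ) T ∧ X t = 0} with hZ
  have hZ_meas : MeasurableSet Z := by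
    have : Z = Icc (0:ℝ) T ∩ X ⁻¹' {0} := by ext t; simp [hZ, and_comm]
    rw [this]
    exact measurableSet_Icc.inter (hX.measurable (measurableSet_singleton 0))
  have hνZ : ν Z = 0 := by
    rw [hν, withDensity_apply _ hZ_meas]
    rw [setLIntegral_congr_fun hZ_meas
      (fun t (ht : t ∈ Z) => ?_), lintegral_zero]
    have : g t = 0 := by
      rw [hg, indicator_of_mem ht.1]
      show l t (X t) = 0
      rw [ht.2]
      exact hl_zero t 0 le_rfl
    simp [this]
  -- Λ agrees with L on Z
  have himg : Λ '' Z = ⇑M '' Z := by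
    refine image_congr fun t ht => ?_
    rw [hΛ]
    show _ = L t
    rw [hL]
    refine intervalIntegral.integral_congr fun s hs => ?_
    rw [uIcc_of_le ht.1.1] at hs
    have hsT : s ∈ Icc (0:ℝ) T := ⟨hs.1, hs.2.trans ht.1.2⟩
    rw [hg, indicator_of_mem hsT]
  rw [himg]
  refine le_antisymm ?_ (zero_le)
  calc volume (⇑M '' Z) ≤ M.measure Z := volume_image_le_stieltjes_measure M Z
    _ = ν Z := by rw [hMν]
    _ = 0 := hνZ
end

section
/- Suppose Λ is continuous nondecreasing with Λ₀ = 0, derived as Λ_t = ∫₀ᵗ λ(s, X_s) ds with X continuous and λ positive exactly on the negative half-line in x. If t ∈ [0,T] satisfies Λ_t ∈ Λ(𝒵), where 𝒵 is the set of zeros of X, then λ(t, X_t) = 0. -/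
open MeasureTheory Set

/-- With `Λ_t = ∫₀ᵗ λ(s, X_s) ds`, `X` continuous and `λ` positive exactly on the
negative half-line in `x`: if `t ∈ [0,T]` satisfies `Λ_t ∈ Λ(𝒵)` where `𝒵` is the zero
set of `X` on `[0,T]`, then `λ(t, X_t) = 0`. -/
theorem intensity_vanishes_on_image_of_zero_set
    (T : ℝ) (hT : 0 ≤ T) (X : ℝ → ℝ) (l : ℝ → ℝ → ℝ)
    (hX : Continuous X)
    (hl_meas : Measurable (Function.uncurry l))
    (hl_nonneg : ∀ t x, 0 ≤ l t x)
    (hl_pos : ∀ t x, x < 0 → 0 < l t x)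
    (hl_zero : ∀ t x, 0 ≤ x → l t x = 0)
    (hint : IntegrableOn (fun s => l s (X s)) (Icc 0 T))
    (Λ : ℝ → ℝ) (hΛ : ∀ t, Λ t = ∫ s in (0 : ℝ)..t, l s (X s))
    (t : ℝ) (ht : t ∈ Icc (0 : ℝ) T)
    (hmem : Λ t ∈ Λ '' {u | u ∈ Icc (0 : ℝ) T ∧ X u = 0}) :
    l t (X t) = 0 := by
  by_contra hne
  -- then X t < 0
  have hXt : X t < 0 := by
    by_contra h
    push_neg at h
    exact hne (hl_zero t (X t) h)
  set f : ℝ → ℝ := fun s => l s (X s) with hf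
  have hInt : ∀ a b, a ∈ Icc (0:ℝ) T → b ∈ Icc (0:ℝ) T →
      IntervalIntegrable f volume a b := by
    intro a b ha hb
    rw [intervalIntegrable_iff]
    exact hint.mono_set (Set.uIoc_subset_uIcc.trans (Set.uIcc_subset_Icc ha hb))
  obtain ⟨u, ⟨hu, hXu⟩, hΛeq⟩ := hmem
  -- X negative near t
  have hnhds : ∀ᶠ s in nhds t, X s < 0 := (hX.tendsto t).eventually (eventually_lt_nhds hXt)
  obtain ⟨δ, hδ, hball⟩ := Metric.eventually_nhds_iff.mp hnhds
  -- integral over u..t vanishes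
  have hzero : ∫ s in u..t, f s = 0 := by
    have h0 : (0:ℝ) ∈ Icc (0:ℝ) T := ⟨le_refl 0, hT⟩
    have := intervalIntegral.integral_interval_sub_left (hInt 0 t h0 ht) (hInt 0 u h0 hu)
    rw [← this, ← hΛ t, ← hΛ u, hΛeq, sub_self]
  have hut : u ≠ t := fun h => by rw [← h, hXu] at hXt; exact lt_irrefl 0 hXt
  rcases lt_or_gt_of_ne hut with hlt | hgt
  · -- u < t : integral over (max u (t-δ))..t positive
    set c := max u (t - δ) with hc
    have hcu : u ≤ c := le_max_left _ _
    have hct : c < t := max_lt hlt (by linarith)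
    have hcmem : c ∈ Icc (0:ℝ) T := ⟨le_trans hu.1 hcu, le_trans hct.le ht.2⟩
    have hpos : 0 < ∫ s in c..t, f s := by
      apply intervalIntegral.intervalIntegral_pos_of_pos_on (hInt c t hcmem ht)
      · intro x hx
        refine hl_pos x (X x) (hball ?_)
        rw [Real.dist_eq, abs_lt]
        constructor
        · have : t - δ ≤ c := le_max_right _ _
          linarith [hx.1]
        · linarith [hx.2]
      · exact hct
    have hnn : 0 ≤ ∫ s in u..c, f s :=
      intervalIntegral.integral_nonneg hcu (fun x _ => hl_nonneg x (X x))
    have hsplit : (∫ s in u..c, f s) + ∫ s in c..t, f s = ∫ s in u..t, f s :=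
      intervalIntegral.integral_add_adjacent_intervals (hInt u c hu hcmem) (hInt c t hcmem ht)
    rw [hzero] at hsplit
    linarith
  · -- t < u
    set c := min u (t + δ) with hc
    have hcu : c ≤ u := min_le_left _ _
    have htc : t < c := lt_min hgt (by linarith)
    have hcmem : c ∈ Icc (0:ℝ) T := ⟨le_trans ht.1 htc.le, le_trans hcu hu.2⟩
    have hpos : 0 < ∫ s in t..c, f s := by
      apply intervalIntegral.intervalIntegral_pos_of_pos_on (hInt t c ht hcmem)
      · intro x hx
        refine hl_pos x (X x) (hball ?_)
        rw [Real.dist_eq, abs_lt]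
        constructor
        · linarith [hx.1]
        · have : c ≤ t + δ := min_le_right _ _
          linarith [hx.2]
      · exact htc
    have hnn : 0 ≤ ∫ s in c..u, f s :=
      intervalIntegral.integral_nonneg hcu (fun x _ => hl_nonneg x (X x))
    have hsplit : (∫ s in t..c, f s) + ∫ s in c..u, f s = ∫ s in t..u, f s :=
      intervalIntegral.integral_add_adjacent_intervals (hInt t c ht hcmem) (hInt c u hcmem hu)
    have hz2 : ∫ s in t..u, f s = 0 := by
      rw [intervalIntegral.integral_symm u t, hzero, neg_zero]
    rw [hz2] at hsplit
    linarith
end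

section
/- Monotone limits and lim sup inequality: with L and Lⁿ as above (Lⁿ nondecreasing in n, pointwise a.s. limits ℓ on rationals, L the right-continuous regularization of ℓ), for every t ∈ [0, T+1] one has lim_n Lⁿ_t ≤ L_t almost surely. -/
open MeasureTheory Set Filter
open scoped Topology

/-- Monotone limits and lim sup inequality: with `Lⁿ` nondecreasing in `n`, pointwise
a.s. limits `ℓ` on rationals (and at `T+1`), and `L` the right-continuous
regularization of `ℓ`, for every `t ∈ [0, T+1]` one has `lim_n Lⁿ_t ≤ L_t` almost
surely (stated via `limsup`). -/
theorem monotone_limit_limsup_le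
    {Ω : Type*} [MeasurableSpace Ω] (P : Measure Ω) [IsProbabilityMeasure P]
    (T : ℝ) (hT : 0 ≤ T)
    (L : ℕ → ℝ → Ω → ℝ)
    (hrange : ∀ n t ω, L n t ω ∈ Icc (0 : ℝ) 1)
    (hpathmono : ∀ n ω, Monotone fun t => L n t ω)
    (hzero : ∀ n, ∀ t < (0 : ℝ), ∀ ω, L n t ω = 0)
    (hmono : ∀ m n : ℕ, n ≤ m → ∀ᵐ ω ∂P, ∀ t ∈ Icc (0 : ℝ) (T + 1), L n t ω ≤ L m t ω)
    (ℓ : ℝ → Ω → ℝ)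
    (hℓ : ∀ t : ℝ, ((t ∈ Icc (0 : ℝ) (T + 1) ∧ ∃ q : ℚ, (q : ℝ) = t) ∨ t = T + 1) →
      ∀ᵐ ω ∂P, Tendsto (fun n => L n t ω) atTop (𝓝 (ℓ t ω)))
    (Llim : ℝ → Ω → ℝ)
    (hLlim : ∀ t ∈ Ico (0 : ℝ) (T + 1), ∀ ω,
      Tendsto (fun s => ℓ s ω)
        (𝓝[{s : ℝ | t < s ∧ s ≤ T + 1 ∧ ∃ q : ℚ, (q : ℝ) = s}] t) (𝓝 (Llim t ω)))
    (hLlimT : ∀ ω, Llim (T + 1) ω = ℓ (T + 1) ω) :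
    ∀ t ∈ Icc (0 : ℝ) (T + 1),
      ∀ᵐ ω ∂P, Filter.limsup (fun n => L n t ω) atTop ≤ Llim t ω := by

  intro t ht
  rcases eq_or_lt_of_le ht.2 with htT | htT
  · -- t = T + 1
    filter_upwards [hℓ t (Or.inr htT)] with ω hω
    rw [hω.limsup_eq, htT, hLlimT]
  · -- t < T + 1
    set S : Set ℝ := {s : ℝ | t < s ∧ s ≤ T + 1 ∧ ∃ q : ℚ, (q : ℝ) = s} with hSdef
    have hS : (𝓝[S] t).NeBot := by
      rw [← mem_closure_iff_nhdsWithin_neBot]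
      rw [Metric.mem_closure_iff]
      intro ε hε
      obtain ⟨q, hq1, hq2⟩ := exists_rat_btwn (lt_min (lt_add_of_pos_right t hε) htT)
      refine ⟨(q : ℝ), ⟨hq1, le_of_lt (lt_of_lt_of_le hq2 (min_le_right _ _)), ⟨q, rfl⟩⟩, ?_⟩
      rw [Real.dist_eq, abs_of_nonpos (by linarith)]
      have := lt_of_lt_of_le hq2 (min_le_left _ _)
      linarith
    have key : ∀ᵐ ω ∂P, ∀ q : ℚ, t < (q : ℝ) → (q : ℝ) ≤ T + 1 →
        Tendsto (fun n => L n (q : ℝ) ω) atTop (𝓝 (ℓ (q : ℝ) ω)) := by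
      rw [ae_all_iff]
      intro q
      by_cases hq : t < (q : ℝ) ∧ (q : ℝ) ≤ T + 1
      · filter_upwards [hℓ (q : ℝ) (Or.inl ⟨⟨le_trans ht.1 hq.1.le, hq.2⟩, ⟨q, rfl⟩⟩)]
          with ω hω _ _
        exact hω
      · filter_upwards with ω h1 h2
        exact absurd ⟨h1, h2⟩ hq
    filter_upwards [key] with ω hω
    have hbound : ∀ s ∈ S, limsup (fun n => L n t ω) atTop ≤ ℓ s ω := by
      rintro s ⟨hs1, hs2, q, rfl⟩
      have htend := hω q hs1 hs2
      have h1 : limsup (fun n => L n t ω) atTop ≤ limsup (fun n => L n (q : ℝ) ω) atTop := by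
        refine limsup_le_limsup (Eventually.of_forall fun n => hpathmono n ω hs1.le) ?_ ?_
        · have hb : IsBoundedUnder (· ≥ ·) atTop (fun n => L n t ω) :=
            isBoundedUnder_of ⟨0, fun n => (hrange n t ω).1⟩
          exact hb.isCoboundedUnder_le
        · exact isBoundedUnder_of ⟨1, fun n => (hrange n (q : ℝ) ω).2⟩
      rw [htend.limsup_eq] at h1
      exact h1
    exact ge_of_tendsto (hLlim t ⟨ht.1, htT⟩ ω)
      (eventually_mem_nhdsWithin.mono hbound)
end

section
/- Downcrossing property implies right-continuity of the hitting time from above: let x : [0, T₁] → ℝ be càdlàg with only negative jumps, set τ(x) = inf{0 < t ≤ T₁ : x_t ≤ 0} (inf ∅ = ∞). Suppose τ(x) < T₁ and x has the downcrossing property at τ(x): for every δ > 0 there exists t ∈ [τ(x), τ(x)+δ] with x_t < 0. If x_n → x in the Skorokhod M1 topology on D[0, T₁], then lim sup_n τ(x_n) ≤ τ(x). -/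
open Set Filter
open scoped Topology

/-- The left limit of `x` at `t`, with the convention `x(0−) = x(0)`. -/
noncomputable def leftLimAt (x : ℝ → ℝ) (t : ℝ) : ℝ :=
  if t = 0 then x 0 else Function.leftLim x t

/-- The completed graph of a càdlàg function `x` on `[0,T]`: the set of points `(t,z)`
with `z` between `x(t−)` and `x(t)`. -/
def completedGraph (T : ℝ) (x : ℝ → ℝ) : Set (ℝ × ℝ) :=
  {p | p.1 ∈ Icc 0 T ∧
    p.2 ∈ Icc (min (leftLimAt x p.1) (x p.1)) (max (leftLimAt x p.1) (x p.1))}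

/-- The order on the completed graph of `x`: `(t₁,z₁) ≤ (t₂,z₂)` if `t₁ < t₂`, or
`t₁ = t₂` and `z₁` is closer to `x(t₁−)` than `z₂`. -/
def graphLE (x : ℝ → ℝ) (p q : ℝ × ℝ) : Prop :=
  p.1 < q.1 ∨ (p.1 = q.1 ∧ |p.2 - leftLimAt x p.1| ≤ |q.2 - leftLimAt x p.1|)

/-- `(r, u)` is a parametric representation of the completed graph of `x` on `[0,T]`:
a continuous nondecreasing (with respect to the graph order) map from `[0,1]` onto the
completed graph. -/
def IsParamRep (T : ℝ) (x : ℝ → ℝ) (r u : ℝ → ℝ) : Prop :=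
  ContinuousOn r (Icc 0 1) ∧ ContinuousOn u (Icc 0 1) ∧
  (∀ s ∈ Icc (0 : ℝ) 1, (r s, u s) ∈ completedGraph T x) ∧
  (∀ p ∈ completedGraph T x, ∃ s ∈ Icc (0 : ℝ) 1, (r s, u s) = p) ∧
  (∀ s₁ ∈ Icc (0 : ℝ) 1, ∀ s₂ ∈ Icc (0 : ℝ) 1, s₁ ≤ s₂ →
    graphLE x (r s₁, u s₁) (r s₂, u s₂))

/-- Convergence `x_n → x` in the Skorokhod `M1` topology on `D[0,T]`: for every
`ε > 0`, eventually there exist parametric representations of `x` and `x_n` that are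
uniformly `ε`-close. -/
def TendstoM1 (T : ℝ) (xn : ℕ → ℝ → ℝ) (x : ℝ → ℝ) : Prop :=
  ∀ ε > (0 : ℝ), ∃ N : ℕ, ∀ n ≥ N, ∃ r u rn un : ℝ → ℝ,
    IsParamRep T x r u ∧ IsParamRep T (xn n) rn un ∧
    ∀ s ∈ Icc (0 : ℝ) 1, |r s - rn s| ≤ ε ∧ |u s - un s| ≤ ε

/-- `x` is càdlàg on `[0,T]`: right-continuous, with left limits. -/
def CadlagOn (T : ℝ) (x : ℝ → ℝ) : Prop :=
  (∀ t ∈ Ico (0 : ℝ) T, ContinuousWithinAt x (Ici t) t) ∧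
  (∀ t ∈ Ioc (0 : ℝ) T, Tendsto x (𝓝[Iio t] t) (𝓝 (Function.leftLim x t)))

/-- Downcrossing implies upper semicontinuity of the hitting time: let `x` be càdlàg on
`[0,T₁]` with only negative jumps, let `τ(x) = inf{0 < t ≤ T₁ : x_t ≤ 0} < T₁`, and
suppose `x` has the downcrossing property at `τ(x)`. If `x_n → x` in `M1`, then
`limsup_n τ(x_n) ≤ τ(x)`: for every `δ > 0`, eventually the hitting set of `x_n` meets
`(0, τ(x) + δ]`. -/
theorem m1_limsup_hitting_le
    (T₁ : ℝ) (hT : 0 < T₁)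
    (x : ℝ → ℝ) (xn : ℕ → ℝ → ℝ)
    (hx : CadlagOn T₁ x)
    (hxn : ∀ n, CadlagOn T₁ (xn n))
    (hneg : ∀ t ∈ Ioc (0 : ℝ) T₁, x t ≤ Function.leftLim x t)
    (hne : {t : ℝ | 0 < t ∧ t ≤ T₁ ∧ x t ≤ 0}.Nonempty)
    (hτlt : sInf {t : ℝ | 0 < t ∧ t ≤ T₁ ∧ x t ≤ 0} < T₁)
    (hdown : ∀ δ > (0 : ℝ), ∃ t ∈ Icc (sInf {t : ℝ | 0 < t ∧ t ≤ T₁ ∧ x t ≤ 0})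
      (sInf {t : ℝ | 0 < t ∧ t ≤ T₁ ∧ x t ≤ 0} + δ), x t < 0)
    (hconv : TendstoM1 T₁ xn x) :
    ∀ δ > (0 : ℝ), ∀ᶠ n in atTop, ∃ t : ℝ, 0 < t ∧ t ≤ T₁ ∧ xn n t ≤ 0 ∧
      t ≤ sInf {t : ℝ | 0 < t ∧ t ≤ T₁ ∧ x t ≤ 0} + δ := by
  intro δ hδ
  set τ := sInf {t : ℝ | 0 < t ∧ t ≤ T₁ ∧ x t ≤ 0} with hτdef
  have hτ0 : (0 : ℝ) ≤ τ := le_csInf hne fun b hb => hb.1.le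
  set δ' := min δ ((T₁ - τ) / 2) with hδ'def
  have hδ'pos : 0 < δ' := lt_min hδ (by linarith)
  have hδ'le : δ' ≤ δ := min_le_left _ _
  have hδ'le2 : δ' ≤ (T₁ - τ) / 2 := min_le_right _ _
  -- pick t₀ with x t₀ < 0
  obtain ⟨t₀, ht₀mem, ht₀neg⟩ := hdown (δ' / 2) (by linarith)
  have ht₀0 : 0 ≤ t₀ := le_trans hτ0 ht₀mem.1
  have ht₀le : t₀ ≤ τ + δ' / 2 := ht₀mem.2
  have ht₀T : t₀ < T₁ := by linarith
  -- pick t₁ > t₀ with x t₁ < x t₀ / 2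
  have hrc : Tendsto x (𝓝[Ioi t₀] t₀) (𝓝 (x t₀)) :=
    (hx.1 t₀ ⟨ht₀0, ht₀T⟩).mono_left (nhdsWithin_mono _ Ioi_subset_Ici_self)
  set m := min (δ' / 4) (T₁ - t₀) with hmdef
  have hmpos : 0 < m := lt_min (by linarith) (by linarith)
  have hev1 : ∀ᶠ s in 𝓝[Ioi t₀] t₀, x s < x t₀ / 2 :=
    hrc.eventually (eventually_lt_nhds (by linarith))
  have hev2 : ∀ᶠ s in 𝓝[Ioi t₀] t₀, s ∈ Ioo t₀ (t₀ + m) :=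
    Ioo_mem_nhdsGT_of_mem ⟨le_refl _, by linarith⟩
  obtain ⟨t₁, ht₁neg, ht₁mem⟩ := (hev1.and hev2).exists
  have ht₁0 : 0 < t₁ := lt_of_le_of_lt ht₀0 ht₁mem.1
  have ht₁T : t₁ < T₁ := lt_of_lt_of_le ht₁mem.2 (by
    have := min_le_right (δ' / 4) (T₁ - t₀); linarith)
  have ht₁le : t₁ ≤ τ + 3 * δ' / 4 := by
    have h1 : t₁ < t₀ + m := ht₁mem.2
    have h2 : m ≤ δ' / 4 := min_le_left _ _
    linarith
  -- choose ε
  set ε := min (-(x t₀) / 4) (min (t₁ / 2) (δ' / 4)) with hεdef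
  have hεpos : 0 < ε := lt_min (by linarith) (lt_min (by linarith) (by linarith))
  have hε1 : ε ≤ -(x t₀) / 4 := min_le_left _ _
  have hε2 : ε ≤ t₁ / 2 := le_trans (min_le_right _ _) (min_le_left _ _)
  have hε3 : ε ≤ δ' / 4 := le_trans (min_le_right _ _) (min_le_right _ _)
  obtain ⟨N, hN⟩ := hconv ε hεpos
  refine eventually_atTop.2 ⟨N, fun n hn => ?_⟩
  obtain ⟨r, u, rn, un, hrep1, hrep2, hclose⟩ := hN n hn
  -- the point (t₁, x t₁) lies on the completed graph of x
  have hmem : ((t₁, x t₁) : ℝ × ℝ) ∈ completedGraph T₁ x :=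
    ⟨⟨ht₁0.le, ht₁T.le⟩, ⟨min_le_right _ _, le_max_right _ _⟩⟩
  obtain ⟨s, hs, heq⟩ := hrep1.2.2.2.1 (t₁, x t₁) hmem
  have hrs : r s = t₁ := congrArg Prod.fst heq
  have hus : u s = x t₁ := congrArg Prod.snd heq
  obtain ⟨hcr, hcu⟩ := hclose s hs
  rw [hrs] at hcr; rw [hus] at hcu
  set t' := rn s with ht'def
  have hgraph := hrep2.2.2.1 s hs
  have hgt : t' ∈ Icc (0 : ℝ) T₁ := hgraph.1
  have hgmin : min (leftLimAt (xn n) t') (xn n t') ≤ un s := hgraph.2.1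
  obtain ⟨hcr1, hcr2⟩ := abs_le.mp hcr
  obtain ⟨hcu1, hcu2⟩ := abs_le.mp hcu
  have hun_neg : un s < 0 := by linarith
  have ht'pos : 0 < t' := by linarith
  have ht'le : t' ≤ τ + δ' := by linarith
  have hminlt : min (leftLimAt (xn n) t') (xn n t') < 0 := lt_of_le_of_lt hgmin hun_neg
  rcases min_lt_iff.mp hminlt with hll | hval
  · -- left limit negative: find a slightly earlier point
    have ht'ne : t' ≠ 0 := ne_of_gt ht'pos
    rw [leftLimAt, if_neg ht'ne] at hll
    have hlt := (hxn n).2 t' ⟨ht'pos, hgt.2⟩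
    have he1 : ∀ᶠ s' in 𝓝[Iio t'] t', xn n s' < 0 :=
      hlt.eventually (eventually_lt_nhds hll)
    have he2 : ∀ᶠ s' in 𝓝[Iio t'] t', s' ∈ Ioo (0 : ℝ) t' :=
      Ioo_mem_nhdsLT_of_mem ⟨ht'pos, le_refl _⟩
    obtain ⟨s', hs'neg, hs'mem⟩ := (he1.and he2).exists
    exact ⟨s', hs'mem.1, le_trans hs'mem.2.le hgt.2, hs'neg.le,
      le_trans hs'mem.2.le (le_trans ht'le (by linarith))⟩
  · exact ⟨t', ht'pos, hgt.2, hval.le, le_trans ht'le (by linarith)⟩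
end
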